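/- Integral inequality implies exponential decay: if E : [0,∞) → [0,∞) is non-increasing and there is M > 0 with ∫_t^∞ E(s) ds ≤ M·E(t) for all t ≥ 0, then E(t) ≤ E(0)·e^{1 − t/M} for all t ≥ M. -/

import Mathlib

open MeasureTheory Set Filter

theorem komornik_exponential_decay
    (E : ℝ → ℝ) (M : ℝ) (hM : 0 < M)
    (hnonneg : ∀ t, 0 ≤ t → 0 ≤ E t)
    (hmono : AntitoneOn E (Set.Ici 0))
    (hint : MeasureTheory.IntegrableOn E (Set.Ici 0))
    (hineq : ∀ t, 0 ≤ t → (∫ s in Set.Ioi t, E s) ≤ M * E t) :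
    ∀ t, M ≤ t → E t ≤ E 0 * Real.exp (1 - t / M) := by
  set F : ℝ → ℝ := fun t => ∫ s in Set.Ioi t, E s with hF
  have hIntOn : ∀ s : Set ℝ, s ⊆ Set.Ici 0 → IntegrableOn E s := fun s hs => hint.mono_set hs
  have hvolIoc : ∀ a b : ℝ, a ≤ b → (volume (Set.Ioc a b)).toReal = b - a := by
    intro a b hab
    rw [Real.volume_Ioc, ENNReal.toReal_ofReal (by linarith)]
  -- lower bound for ∫ over Ioc a b
  have hlow : ∀ a b : ℝ, 0 ≤ a → a ≤ b →
      E b * (b - a) ≤ ∫ s in Set.Ioc a b, E s := by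
    intro a b ha hab
    have := setIntegral_ge_of_const_le (c := E b) (f := E) (μ := volume)
      measurableSet_Ioc (by simp) (fun x hx => hmono
        (show x ∈ Set.Ici (0:ℝ) from le_trans ha hx.1.le)
        (show b ∈ Set.Ici (0:ℝ) from le_trans ha hab) hx.2)
      (hIntOn _ (fun x hx => le_trans ha hx.1.le))
    rwa [measureReal_def, hvolIoc a b hab, smul_eq_mul, mul_comm] at this
  -- splitting
  have hsplit : ∀ a b : ℝ, 0 ≤ a → a ≤ b →
      F a = (∫ s in Set.Ioc a b, E s) + F b := by
    intro a b ha hab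
    have hu : Set.Ioc a b ∪ Set.Ioi b = Set.Ioi a := Set.Ioc_union_Ioi_eq_Ioi hab
    rw [hF]
    simp only
    rw [← hu, setIntegral_union (Set.Ioc_disjoint_Ioi_same) measurableSet_Ioi
      (hIntOn _ (fun x hx => le_trans ha hx.1.le))
      (hIntOn _ (fun x hx => le_trans (le_trans ha hab) (le_of_lt hx)))]
  -- key step
  have step : ∀ t h : ℝ, 0 ≤ t → 0 ≤ h → F (t + h) ≤ M / (M + h) * F t := by
    intro t h ht hh
    have hab : t ≤ t + h := by linarith
    have h1 := hsplit t (t + h) ht hab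
    have h2 := hlow t (t + h) ht hab
    have h3 := hineq (t + h) (by linarith)
    have h4 : (∫ s in Set.Ioi (t+h), E s) = F (t+h) := rfl
    rw [h4] at h3
    have hMh : 0 < M + h := by linarith
    rw [div_mul_eq_mul_div, le_div_iff₀ hMh]
    have hsimp : t + h - t = h := by ring
    rw [hsimp] at h2
    nlinarith [hnonneg (t+h) (by linarith)]
  -- iteration
  have iter : ∀ h : ℝ, 0 ≤ h → ∀ n : ℕ, F ((n : ℝ) * h) ≤ (M / (M + h)) ^ n * F 0 := by
    intro h hh n
    induction n with
    | zero => simp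
    | succ n ih =>
      have h1 : ((n : ℝ) + 1) * h = (n : ℝ) * h + h := by ring
      have hq : 0 ≤ M / (M + h) := div_nonneg hM.le (by linarith)
      calc F (((n : ℕ) + 1 : ℕ) * h) = F ((n:ℝ) * h + h) := by push_cast; rw [h1]
        _ ≤ M / (M + h) * F ((n:ℝ) * h) :=
            step ((n:ℝ)*h) h (by positivity) hh
        _ ≤ M / (M + h) * ((M / (M + h)) ^ n * F 0) := by
            exact mul_le_mul_of_nonneg_left ih hq
        _ = (M / (M + h)) ^ (n+1) * F 0 := by ring
  -- exponential decay of F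
  have decay : ∀ t : ℝ, 0 ≤ t → F t ≤ F 0 * Real.exp (-(t / M)) := by
    intro t ht
    have key : ∀ n : ℕ, 1 ≤ n → F t ≤ ((1 + (t/M) / n) ^ n)⁻¹ * F 0 := by
      intro n hn
      have hn' : (0:ℝ) < n := by exact_mod_cast hn
      have hh : 0 ≤ t / n := by positivity
      have := iter (t / n) hh n
      rw [mul_div_cancel₀ _ (ne_of_gt hn')] at this
      have hd1 : (0:ℝ) < M + t / n := by positivity
      have hd2 : (0:ℝ) < 1 + t / M / n := by positivity
      have heq : M / (M + t / n) = ((1 + (t/M) / n))⁻¹ := by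
        rw [inv_eq_one_div, div_eq_div_iff hd1.ne' hd2.ne']
        field_simp
      rw [heq, inv_pow] at this
      exact this
    have hT : Tendsto (fun n : ℕ => ((1 + (t/M) / n) ^ n)⁻¹ * F 0) atTop
        (nhds ((Real.exp (t/M))⁻¹ * F 0)) := by
      exact ((Real.tendsto_one_add_div_pow_exp (t/M)).inv₀ (Real.exp_ne_zero _)).mul_const (F 0)
    have := ge_of_tendsto hT (Filter.eventually_atTop.2 ⟨1, fun n hn => key n hn⟩)
    rwa [← Real.exp_neg, mul_comm] at this
  -- conclusion
  intro t ht
  have ht0 : 0 ≤ t := le_trans hM.le ht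
  have ha : 0 ≤ t - M := by linarith
  have h1 : E t * (t - (t - M)) ≤ ∫ s in Set.Ioc (t - M) t, E s := hlow (t - M) t ha (by linarith)
  have h2 : (∫ s in Set.Ioc (t - M) t, E s) ≤ F (t - M) := by
    rw [hsplit (t - M) t ha (by linarith)]
    have : 0 ≤ F t := by
      apply setIntegral_nonneg measurableSet_Ioi
      intro x hx; exact hnonneg x (le_trans ht0 hx.le)
    linarith
  have h3 := decay (t - M) ha
  have h4 : F 0 ≤ M * E 0 := hineq 0 le_rfl
  have hexp : Real.exp (-((t - M) / M)) = Real.exp (1 - t / M) := by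
    congr 1; field_simp; ring
  have hexppos : 0 < Real.exp (1 - t / M) := Real.exp_pos _
  have hE0 : 0 ≤ E 0 := hnonneg 0 le_rfl
  have : M * E t ≤ M * (E 0 * Real.exp (1 - t / M)) := by
    have : E t * (t - (t - M)) = M * E t := by ring
    rw [this] at h1
    calc M * E t ≤ F (t - M) := le_trans h1 h2
      _ ≤ F 0 * Real.exp (-((t - M) / M)) := h3
      _ ≤ M * E 0 * Real.exp (-((t - M) / M)) := by
          apply mul_le_mul_of_nonneg_right h4 (Real.exp_pos _).le
      _ = M * (E 0 * Real.exp (1 - t / M)) := by rw [hexp]; ring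
  exact le_of_mul_le_mul_left this hM
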